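/- Let A be an associative ring with a unit and K ∈ A an invertible element. Then the map T_K : A³ → A³, T_K(X,Y,Z) = (X, YK + XZ, KZK⁻¹), satisfies the tetrahedron equation; furthermore T_K is bijective, its inverse is the map (X̂,Ŷ,Ẑ) ↦ (X̂, ŶK⁻¹ − X̂K⁻¹Ẑ, K⁻¹ẐK), and this inverse map also satisfies the tetrahedron equation. -/
import Mathlib


/-- `T` acting on factors 1,2,3 of the sixfold Cartesian product `D⁶`. -/
def tetra123 {D : Type*} (T : D × D × D → D × D × D) :
    D × D × D × D × D × D → D × D × D × D × D × D :=
  fun q =>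
    match q with
    | (x, y, z, r, s, t) =>
      ((T (x, y, z)).1, (T (x, y, z)).2.1, (T (x, y, z)).2.2, r, s, t)

/-- `T` acting on factors 1,4,5 of the sixfold Cartesian product `D⁶`. -/
def tetra145 {D : Type*} (T : D × D × D → D × D × D) :
    D × D × D × D × D × D → D × D × D × D × D × D :=
  fun q =>
    match q with
    | (x, y, z, r, s, t) =>
      ((T (x, r, s)).1, y, z, (T (x, r, s)).2.1, (T (x, r, s)).2.2, t)

/-- `T` acting on factors 2,4,6 of the sixfold Cartesian product `D⁶`. -/
def tetra246 {D : Type*} (T : D × D × D → D × D × D) :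
    D × D × D × D × D × D → D × D × D × D × D × D :=
  fun q =>
    match q with
    | (x, y, z, r, s, t) =>
      (x, (T (y, r, t)).1, z, (T (y, r, t)).2.1, s, (T (y, r, t)).2.2)

/-- `T` acting on factors 3,5,6 of the sixfold Cartesian product `D⁶`. -/
def tetra356 {D : Type*} (T : D × D × D → D × D × D) :
    D × D × D × D × D × D → D × D × D × D × D × D :=
  fun q =>
    match q with
    | (x, y, z, r, s, t) =>
      (x, y, (T (z, s, t)).1, r, (T (z, s, t)).2.1, (T (z, s, t)).2.2)

/-- The (Zamolodchikov) tetrahedron equation for a map `T : D³ → D³`. -/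
def IsTetrahedronMap {D : Type*} (T : D × D × D → D × D × D) : Prop :=
  tetra123 T ∘ tetra145 T ∘ tetra246 T ∘ tetra356 T =
    tetra356 T ∘ tetra246 T ∘ tetra145 T ∘ tetra123 T

set_option maxHeartbeats 1000000 in
theorem stmt_5 {A : Type*} [Ring A] (K : Aˣ) :
    IsTetrahedronMap (fun p : A × A × A =>
      (p.1, p.2.1 * (K : A) + p.1 * p.2.2, (K : A) * p.2.2 * ((K⁻¹ : Aˣ) : A))) ∧
    Function.Bijective (fun p : A × A × A =>
      (p.1, p.2.1 * (K : A) + p.1 * p.2.2, (K : A) * p.2.2 * ((K⁻¹ : Aˣ) : A))) ∧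
    Function.LeftInverse
      (fun p : A × A × A =>
        (p.1, p.2.1 * ((K⁻¹ : Aˣ) : A) - p.1 * ((K⁻¹ : Aˣ) : A) * p.2.2, ((K⁻¹ : Aˣ) : A) * p.2.2 * (K : A)))
      (fun p : A × A × A =>
        (p.1, p.2.1 * (K : A) + p.1 * p.2.2, (K : A) * p.2.2 * ((K⁻¹ : Aˣ) : A))) ∧
    Function.RightInverse
      (fun p : A × A × A =>
        (p.1, p.2.1 * ((K⁻¹ : Aˣ) : A) - p.1 * ((K⁻¹ : Aˣ) : A) * p.2.2, ((K⁻¹ : Aˣ) : A) * p.2.2 * (K : A)))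
      (fun p : A × A × A =>
        (p.1, p.2.1 * (K : A) + p.1 * p.2.2, (K : A) * p.2.2 * ((K⁻¹ : Aˣ) : A))) ∧
    IsTetrahedronMap (fun p : A × A × A =>
      (p.1, p.2.1 * ((K⁻¹ : Aˣ) : A) - p.1 * ((K⁻¹ : Aˣ) : A) * p.2.2, ((K⁻¹ : Aˣ) : A) * p.2.2 * (K : A))) := by
  have hli : Function.LeftInverse
      (fun p : A × A × A =>
        (p.1, p.2.1 * ((K⁻¹ : Aˣ) : A) - p.1 * ((K⁻¹ : Aˣ) : A) * p.2.2, ((K⁻¹ : Aˣ) : A) * p.2.2 * (K : A)))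
      (fun p : A × A × A =>
        (p.1, p.2.1 * (K : A) + p.1 * p.2.2, (K : A) * p.2.2 * ((K⁻¹ : Aˣ) : A))) := by
    rintro ⟨x, y, z⟩
    simp [mul_assoc, add_mul, sub_eq_iff_eq_add]
  have hri : Function.RightInverse
      (fun p : A × A × A =>
        (p.1, p.2.1 * ((K⁻¹ : Aˣ) : A) - p.1 * ((K⁻¹ : Aˣ) : A) * p.2.2, ((K⁻¹ : Aˣ) : A) * p.2.2 * (K : A)))
      (fun p : A × A × A =>
        (p.1, p.2.1 * (K : A) + p.1 * p.2.2, (K : A) * p.2.2 * ((K⁻¹ : Aˣ) : A))) := by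
    rintro ⟨x, y, z⟩
    simp [mul_assoc, sub_mul, sub_add_cancel]
  refine ⟨?_, ⟨hli.injective, hri.surjective⟩, hli, hri, ?_⟩
  · funext q
    obtain ⟨x, y, z, r, s, t⟩ := q
    simp only [Function.comp, tetra123, tetra145, tetra246, tetra356]
    refine Prod.ext ?_ (Prod.ext ?_ (Prod.ext ?_ (Prod.ext ?_ (Prod.ext ?_ ?_)))) <;>
      simp [mul_assoc, mul_add, add_mul] <;> first | abel | noncomm_ring
  · funext q
    obtain ⟨x, y, z, r, s, t⟩ := q
    simp only [Function.comp, tetra123, tetra145, tetra246, tetra356]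
    refine Prod.ext ?_ (Prod.ext ?_ (Prod.ext ?_ (Prod.ext ?_ (Prod.ext ?_ ?_)))) <;>
      simp [mul_assoc, mul_sub, sub_mul, mul_add, add_mul] <;> first | abel | noncomm_ring
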